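/- Let S be a finite linearly ordered set with |S| = k ≥ 1, let (Ω, 𝓕, P) be a probability space, and let X, Y : Ω → S be random variables with P(X ≤ Y) = 1. Then P(X ≠ Y) ≤ (k − 1) · ‖law(X) − law(Y)‖_TV. -/

import Mathlib

open MeasureTheory

lemma meas_finset_toReal {S : Type*} [MeasurableSpace S] [MeasurableSingletonClass S]
    (μ : Measure S) [IsFiniteMeasure μ] (A : Finset S) :
    (μ (A : Set S)).toReal = ∑ s ∈ A, (μ {s}).toReal := by
  classical
  have h : μ (A : Set S) = ∑ s ∈ A, μ {s} := by
    have : (A : Set S) = ⋃ s ∈ A, {s} := by ext x; simp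
    rw [this, measure_biUnion_finset]
    · intro x _ y _ hxy
      simp [Function.onFun, Set.disjoint_singleton, hxy]
    · intro b _; exact measurableSet_singleton b
  rw [h, ENNReal.toReal_sum]
  intro a _; exact measure_ne_top μ _

lemma tv_bound {S : Type*} [Fintype S] [MeasurableSpace S] [MeasurableSingletonClass S]
    (μ ν : Measure S) [IsProbabilityMeasure μ] [IsProbabilityMeasure ν] (A : Finset S) :
    (μ (A : Set S)).toReal - (ν (A : Set S)).toReal ≤
      (1 / 2) * ∑ s : S, |(μ {s}).toReal - (ν {s}).toReal| := by
  classical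
  set f : S → ℝ := fun s => (μ {s}).toReal with hf
  set g : S → ℝ := fun s => (ν {s}).toReal with hg
  have hμA : (μ (A : Set S)).toReal = ∑ s ∈ A, f s := meas_finset_toReal μ A
  have hνA : (ν (A : Set S)).toReal = ∑ s ∈ A, g s := meas_finset_toReal ν A
  have hμ1 : ∑ s : S, f s = 1 := by
    have := meas_finset_toReal μ (Finset.univ : Finset S)
    simpa [measure_univ] using this.symm
  have hν1 : ∑ s : S, g s = 1 := by
    have := meas_finset_toReal ν (Finset.univ : Finset S)
    simpa [measure_univ] using this.symm
  have hsplitf : ∑ s : S, f s = ∑ s ∈ A, f s + ∑ s ∈ Aᶜ, f s := by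
    rw [Finset.sum_add_sum_compl]
  have hsplitg : ∑ s : S, g s = ∑ s ∈ A, g s + ∑ s ∈ Aᶜ, g s := by
    rw [Finset.sum_add_sum_compl]
  have h1 : ∑ s ∈ A, (f s - g s) ≤ ∑ s ∈ A, |f s - g s| :=
    Finset.sum_le_sum fun s _ => le_abs_self _
  have h2 : ∑ s ∈ Aᶜ, (g s - f s) ≤ ∑ s ∈ Aᶜ, |f s - g s| :=
    Finset.sum_le_sum fun s _ => by rw [abs_sub_comm]; exact le_abs_self _
  have hsplitabs : ∑ s : S, |f s - g s| = ∑ s ∈ A, |f s - g s| + ∑ s ∈ Aᶜ, |f s - g s| := by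
    rw [Finset.sum_add_sum_compl]
  have e1 : ∑ s ∈ A, (f s - g s) = ∑ s ∈ A, f s - ∑ s ∈ A, g s := Finset.sum_sub_distrib _ _
  have e2 : ∑ s ∈ Aᶜ, (g s - f s) = ∑ s ∈ Aᶜ, g s - ∑ s ∈ Aᶜ, f s := Finset.sum_sub_distrib _ _
  rw [hμA, hνA]
  linarith

theorem stmt0 {S : Type*} [Fintype S] [LinearOrder S]
    [MeasurableSpace S] [MeasurableSingletonClass S]
    {Ω : Type*} [MeasurableSpace Ω] (P : Measure Ω) [IsProbabilityMeasure P]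
    (k : ℕ) (hk : 1 ≤ k) (hcard : Fintype.card S = k)
    (X Y : Ω → S) (hX : Measurable X) (hY : Measurable Y)
    (hle : P {ω | X ω ≤ Y ω} = 1) :
    (P {ω | X ω ≠ Y ω}).toReal ≤
      ((k : ℝ) - 1) *
        ((1 / 2) * ∑ s : S, |((P.map X) {s}).toReal - ((P.map Y) {s}).toReal|) := by
  classical
  have hμ : IsProbabilityMeasure (P.map X) := Measure.isProbabilityMeasure_map hX.aemeasurable
  have hν : IsProbabilityMeasure (P.map Y) := Measure.isProbabilityMeasure_map hY.aemeasurable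
  have hSne : Nonempty S := Fintype.card_pos_iff.mp (by omega)
  have huniv_ne : (Finset.univ : Finset S).Nonempty := Finset.univ_nonempty
  set m := (Finset.univ : Finset S).max' huniv_ne with hm
  set T := (Finset.univ : Finset S).erase m with hT
  have hTcard : T.card = k - 1 := by
    rw [hT, Finset.card_erase_of_mem (Finset.mem_univ m), Finset.card_univ, hcard]
  -- the complement of {X ≤ Y} is null
  have hmeasle : MeasurableSet {ω | X ω ≤ Y ω} := by
    have hpair : Measurable fun ω => (X ω, Y ω) := hX.prodMk hY
    have : {ω | X ω ≤ Y ω} = (fun ω => (X ω, Y ω)) ⁻¹' {p : S × S | p.1 ≤ p.2} := rfl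
    rw [this]
    exact hpair (Set.toFinite _).measurableSet
  have hnull : P {ω | X ω ≤ Y ω}ᶜ = 0 := by
    rw [measure_compl hmeasle (measure_ne_top P _), hle, measure_univ, tsub_self]
  -- events E s
  set E : S → Set Ω := fun s => {ω | X ω ≤ s ∧ ¬ Y ω ≤ s} with hE
  have hmeasE : ∀ s, MeasurableSet (E s) := by
    intro s
    exact (hX (Set.toFinite {x | x ≤ s}).measurableSet).inter
      (hY (Set.toFinite {x | x ≤ s}).measurableSet).compl
  -- covering
  have hcover : {ω | X ω ≠ Y ω} ⊆ {ω | X ω ≤ Y ω}ᶜ ∪ ⋃ s ∈ T, E s := by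
    intro ω hω
    by_cases hxy : X ω ≤ Y ω
    · right
      have hlt : X ω < Y ω := lt_of_le_of_ne hxy hω
      have hXm : X ω ∈ T := by
        refine Finset.mem_erase.mpr ⟨?_, Finset.mem_univ _⟩
        intro h
        have : Y ω ≤ m := Finset.le_max' _ _ (Finset.mem_univ _)
        rw [← h] at this
        exact absurd this (not_le.mpr hlt)
      simp only [Set.mem_iUnion]
      exact ⟨X ω, hXm, le_refl _, not_le.mpr hlt⟩
    · left; exact hxy
  have hbound1 : P {ω | X ω ≠ Y ω} ≤ ∑ s ∈ T, P (E s) := by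
    calc P {ω | X ω ≠ Y ω} ≤ P ({ω | X ω ≤ Y ω}ᶜ ∪ ⋃ s ∈ T, E s) := measure_mono hcover
    _ ≤ P {ω | X ω ≤ Y ω}ᶜ + P (⋃ s ∈ T, E s) := measure_union_le _ _
    _ = P (⋃ s ∈ T, E s) := by rw [hnull, zero_add]
    _ ≤ ∑ s ∈ T, P (E s) := measure_biUnion_finset_le _ _
  -- per-s bound : (P (E s)).toReal ≤ μ(Iic s) - ν(Iic s)
  have hper : ∀ s : S, (P (E s)).toReal ≤
      ((P.map X) (↑((Finset.univ.filter (· ≤ s))) : Set S)).toReal -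
      ((P.map Y) (↑((Finset.univ.filter (· ≤ s))) : Set S)).toReal := by
    intro s
    have hAset : (↑((Finset.univ.filter (· ≤ s))) : Set S) = {x | x ≤ s} := by ext x; simp
    have hAmeas : MeasurableSet {x : S | x ≤ s} := (Set.toFinite _).measurableSet
    have hmapX : (P.map X) (↑((Finset.univ.filter (· ≤ s))) : Set S) = P {ω | X ω ≤ s} := by
      rw [hAset, Measure.map_apply hX hAmeas]; rfl
    have hmapY : (P.map Y) (↑((Finset.univ.filter (· ≤ s))) : Set S) = P {ω | Y ω ≤ s} := by
      rw [hAset, Measure.map_apply hY hAmeas]; rfl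
    set B : Set Ω := {ω | X ω ≤ s} ∩ {ω | Y ω ≤ s} with hB
    have hsplit : P {ω | X ω ≤ s} = P B + P (E s) := by
      have : {ω | X ω ≤ s} = B ∪ E s := by
        ext ω
        simp only [hB, hE, Set.mem_setOf_eq, Set.mem_union, Set.mem_inter_iff]
        tauto
      rw [this, measure_union _ (hmeasE s)]
      rw [Set.disjoint_left]
      intro ω hω hω'
      exact hω'.2 hω.2
    have hYB : P {ω | Y ω ≤ s} = P B := by
      apply le_antisymm
      · have hsub : {ω | Y ω ≤ s} ⊆ B ∪ {ω | X ω ≤ Y ω}ᶜ := by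
          intro ω hω
          by_cases h : X ω ≤ Y ω
          · left; exact ⟨le_trans h hω, hω⟩
          · right; exact h
        calc P {ω | Y ω ≤ s} ≤ P (B ∪ {ω | X ω ≤ Y ω}ᶜ) := measure_mono hsub
        _ ≤ P B + P {ω | X ω ≤ Y ω}ᶜ := measure_union_le _ _
        _ = P B := by rw [hnull, add_zero]
      · exact measure_mono fun ω hω => hω.2
    rw [hmapX, hmapY, hsplit, hYB, ENNReal.toReal_add (measure_ne_top P _) (measure_ne_top P _)]
    linarith
  -- combine
  have htoReal : (P {ω | X ω ≠ Y ω}).toReal ≤ ∑ s ∈ T, (P (E s)).toReal := by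
    have hfin : ∑ s ∈ T, P (E s) ≠ ⊤ :=
      (ENNReal.sum_lt_top.mpr fun s _ => measure_lt_top P _).ne
    rw [← ENNReal.toReal_sum fun s _ => measure_ne_top P _]
    exact ENNReal.toReal_mono hfin hbound1
  set D : ℝ := (1 / 2) * ∑ s : S, |((P.map X) {s}).toReal - ((P.map Y) {s}).toReal| with hD
  have hstep : ∀ s ∈ T, (P (E s)).toReal ≤ D := by
    intro s _
    exact (hper s).trans (tv_bound (P.map X) (P.map Y) ((Finset.univ.filter (· ≤ s))))
  calc (P {ω | X ω ≠ Y ω}).toReal ≤ ∑ s ∈ T, (P (E s)).toReal := htoReal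
  _ ≤ ∑ _s ∈ T, D := Finset.sum_le_sum hstep
  _ = (T.card : ℝ) * D := by rw [Finset.sum_const, nsmul_eq_mul]
  _ = ((k : ℝ) - 1) * D := by
      rw [hTcard, Nat.cast_sub hk, Nat.cast_one]
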